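/- arXiv:1409.6172 — 2 statements merged into one kernel-verified Lean document; each statement's English description precedes it below -/
import Mathlib

section
/- In a finite game tree with strict preferences, at any node c reached by the PPE construction with nonempty remaining-outcome set I, after discarding all outcomes discardable by Newcombian States at c, all remaining outcomes are descendants of exactly one child of c. That is, there exists a unique child f of c such that the remaining set intersects D(f). -/
open Classical

section PPE

variable {O C : Type*} [Fintype O] [DecidableEq O] [DecidableEq C]

/-- Target set of a Newcombian State (a list of children of the current node),
defined recursively from the remaining-outcome set `I`, the descendant map `D`
and the current player's payoff `pay`. -/
noncomputable def target (I : Finset O) (D : C → Finset O) (pay : O → ℤ) :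
    List C → Finset O
  | [] => ∅
  | [n] => I ∩ D n
  | n :: m :: p =>
      let Tp := target I D pay (m :: p)
      (I ∩ D n).filter (fun o => ¬ (Tp.Nonempty ∧ ∀ o' ∈ Tp, pay o < pay o'))

/-- A Newcombian State at the current node: a nonempty list of children with no
two consecutive elements equal. -/
def ValidState (F : Finset C) (η : List C) : Prop :=
  η ≠ [] ∧ (∀ n ∈ η, n ∈ F) ∧ η.Chain' (· ≠ ·)

/-- `o` is discarded by some Newcombian State at the current node. -/
def Discards (I : Finset O) (D : C → Finset O) (pay : O → ℤ) (F : Finset C)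
    (o : O) : Prop :=
  ∃ n p, ValidState F (n :: p) ∧ o ∈ I ∧ o ∉ D n ∧
    (target I D pay (n :: p)).Nonempty ∧
    ∀ o' ∈ target I D pay (n :: p), pay o < pay o'

/-- The set of outcomes remaining after the discarding process at the current node. -/
noncomputable def survivors (I : Finset O) (D : C → Finset O) (pay : O → ℤ)
    (F : Finset C) : Finset O :=
  I.filter (fun o => ¬ Discards I D pay F o)

/-- Worst payoff of a Newcombian State. -/
noncomputable def wp (I : Finset O) (D : C → Finset O) (pay : O → ℤ)
    (η : List C) : ℤ :=
  sInf (pay '' (target I D pay η : Set O))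

end PPE

section Aux

variable {O C : Type*} [Fintype O] [DecidableEq O] [DecidableEq C]

lemma target_subset (I : Finset O) (D : C → Finset O) (pay : O → ℤ)
    (n : C) (p : List C) : target I D pay (n :: p) ⊆ I ∩ D n := by
  cases p with
  | nil => simp [target]
  | cons m q => simp [target]

lemma mem_target_cons {I : Finset O} {D : C → Finset O} {pay : O → ℤ}
    {n m : C} {p : List C} {o : O} :
    o ∈ target I D pay (n :: m :: p) ↔
      o ∈ I ∩ D n ∧ ¬ ((target I D pay (m :: p)).Nonempty ∧
        ∀ o' ∈ target I D pay (m :: p), pay o < pay o') := by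
  simp only [target, Finset.mem_filter]

/-- from membership in `target (n :: tail)` with nonempty tail-target,
extract a tail-target element with payoff `≤`. -/
lemma target_step {I : Finset O} {D : C → Finset O} {pay : O → ℤ}
    {n m : C} {p : List C} {o : O}
    (ht : (target I D pay (m :: p)).Nonempty)
    (ho : o ∈ target I D pay (n :: m :: p)) :
    ∃ u ∈ target I D pay (m :: p), pay u ≤ pay o := by
  rcases mem_target_cons.1 ho with ⟨-, h2⟩
  push_neg at h2
  exact h2 ht

/-- key lemma: if `M` is a global max of `I` lying in child `f`, then every
`x ∈ I` in a different child `f''` gets discarded. -/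
lemma key_discard (I : Finset O) (D : C → Finset O) (pay : O → ℤ) (F : Finset C)
    (hdisj : ∀ c c' : C, c ≠ c' → Disjoint (D c) (D c'))
    (hpay : Function.Injective pay)
    (f f'' : C) (hfF : f ∈ F) (hf''F : f'' ∈ F) (hne : f ≠ f'')
    (M : O) (hMI : M ∈ I) (hMf : M ∈ D f) (hMmax : ∀ y ∈ I, pay y ≤ pay M)
    (x : O) (hxI : x ∈ I) (hxf'' : x ∈ D f'') :
    Discards I D pay F x := by
  have hxf : x ∉ D f := fun h => Finset.disjoint_left.1 (hdisj f f'' hne) h hxf''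
  -- main induction
  suffices H : ∀ n : ℕ, ∀ ρ : List C, ValidState F (f'' :: ρ) →
      x ∈ target I D pay (f'' :: ρ) →
      ((I ∩ D f'').filter
        (fun y => ∃ z ∈ target I D pay (f'' :: ρ), pay z ≤ pay y)).card ≤ n →
      Discards I D pay F x by
    have hval : ValidState F [f''] := by
      refine ⟨by simp, ?_, List.isChain_singleton _⟩
      intro n hn; simp at hn; subst hn; exact hf''F
    have hx1 : x ∈ target I D pay [f''] := by
      simp [target, hxI, hxf'']
    exact H _ [] hval hx1 le_rfl
  intro n
  induction n with
  | zero =>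
    intro ρ hval hx hcard
    exfalso
    have : x ∈ (I ∩ D f'').filter
        (fun y => ∃ z ∈ target I D pay (f'' :: ρ), pay z ≤ pay y) := by
      refine Finset.mem_filter.2 ⟨Finset.mem_inter.2 ⟨hxI, hxf''⟩, ⟨x, hx, le_refl _⟩⟩
    have := Finset.card_pos.2 ⟨x, this⟩
    omega
  | succ n ih =>
    intro ρ hval hx hcard
    set T := target I D pay (f'' :: ρ) with hT
    have hTne : T.Nonempty := ⟨x, hx⟩
    -- the state with f prefixed
    set T' := target I D pay (f :: f'' :: ρ) with hT'
    have hval' : ValidState F (f :: f'' :: ρ) := by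
      obtain ⟨-, h2, h3⟩ := hval
      refine ⟨by simp, ?_, List.isChain_cons_cons.2 ⟨hne, h3⟩⟩
      intro a ha
      rcases List.mem_cons.1 ha with h | h
      · exact h ▸ hfF
      · exact h2 a h
    have hMT' : M ∈ T' := by
      rw [hT', mem_target_cons]
      refine ⟨Finset.mem_inter.2 ⟨hMI, hMf⟩, ?_⟩
      rintro ⟨-, hall⟩
      exact absurd (hall x hx) (not_lt.2 (hMmax x hxI))
    have hT'ne : T'.Nonempty := ⟨M, hMT'⟩
    -- every element of T' is strictly above some element of T
    have hT'big : ∀ w ∈ T', ∃ u ∈ T, pay u < pay w := by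
      intro w hw
      obtain ⟨u, hu, hle⟩ := target_step hTne hw
      have hwDf : w ∈ D f := (Finset.mem_inter.1 ((target_subset I D pay f (f''::ρ)) hw)).2
      have huDf'' : u ∈ D f'' := (Finset.mem_inter.1 ((target_subset I D pay f'' ρ) hu)).2
      have hune : u ≠ w := by
        rintro rfl
        exact Finset.disjoint_left.1 (hdisj f f'' hne) hwDf huDf''
      exact ⟨u, hu, lt_of_le_of_ne hle (fun h => hune (hpay h))⟩
    by_cases hdom : ∀ z ∈ T', pay x < pay z
    · exact ⟨f, f'' :: ρ, hval', hxI, hxf, hT'ne, hdom⟩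
    -- otherwise continue the pump
    push_neg at hdom
    set T'' := target I D pay (f'' :: f :: f'' :: ρ) with hT''
    have hvalid'' : ValidState F (f'' :: f :: f'' :: ρ) := by
      obtain ⟨-, h2, h3⟩ := hval'
      refine ⟨by simp, ?_, List.isChain_cons_cons.2 ⟨Ne.symm hne, h3⟩⟩
      intro a ha
      rcases List.mem_cons.1 ha with h | h
      · subst h; exact (hval.2.1) a (by simp)
      · exact h2 a h
    have hxT'' : x ∈ T'' := by
      rw [hT'', mem_target_cons]
      refine ⟨Finset.mem_inter.2 ⟨hxI, hxf''⟩, ?_⟩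
      rintro ⟨-, hall⟩
      obtain ⟨z, hz, hzle⟩ := hdom
      exact absurd (hall z hz) (not_lt.2 hzle)
    -- measure decrease
    obtain ⟨b, hbT, hbmin⟩ := Finset.exists_min_image T pay hTne
    have hbmem : b ∈ (I ∩ D f'').filter
        (fun y => ∃ z ∈ T, pay z ≤ pay y) :=
      Finset.mem_filter.2 ⟨target_subset I D pay f'' ρ hbT, ⟨b, hbT, le_refl _⟩⟩
    have hstep'' : ∀ z ∈ T'', ∃ w ∈ T', pay w ≤ pay z := fun z hz =>
      target_step hT'ne hz
    have hsub : (I ∩ D f'').filter (fun y => ∃ z ∈ T'', pay z ≤ pay y) ⊆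
        ((I ∩ D f'').filter (fun y => ∃ z ∈ T, pay z ≤ pay y)).erase b := by
      intro y hy
      rcases Finset.mem_filter.1 hy with ⟨hy1, z, hz, hzy⟩
      obtain ⟨w, hw, hwz⟩ := hstep'' z hz
      obtain ⟨u, hu, huw⟩ := hT'big w hw
      refine Finset.mem_erase.2 ⟨?_, Finset.mem_filter.2 ⟨hy1, ⟨u, hu, by omega⟩⟩⟩
      rintro rfl
      have := hbmin u hu
      omega
    have hcard' : ((I ∩ D f'').filter
        (fun y => ∃ z ∈ T'', pay z ≤ pay y)).card ≤ n := by
      have h1 := Finset.card_le_card hsub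
      have h2 : (((I ∩ D f'').filter (fun y => ∃ z ∈ T, pay z ≤ pay y)).erase b).card
          < ((I ∩ D f'').filter (fun y => ∃ z ∈ T, pay z ≤ pay y)).card :=
        Finset.card_erase_lt_of_mem hbmem
      omega
    exact ih (f :: f'' :: ρ) hvalid'' hxT'' hcard'

end Aux

/-- after discarding all outcomes discardable by Newcombian States
at the current node, all remaining outcomes are descendants of exactly one child:
there is a unique child `f` such that the remaining set intersects `D f`. -/
theorem ppe_unique_next_child
    {O C : Type*} [Fintype O] [DecidableEq O] [DecidableEq C]
    (I : Finset O) (D : C → Finset O) (pay : O → ℤ) (F : Finset C)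
    (hI : I.Nonempty)
    (hcov : ∀ o ∈ I, ∃ c ∈ F, o ∈ D c)
    (hdisj : ∀ c c' : C, c ≠ c' → Disjoint (D c) (D c'))
    (hpay : Function.Injective pay) :
    ∃! f : C, f ∈ F ∧ ((survivors I D pay F) ∩ D f).Nonempty := by
  obtain ⟨M, hMI, hMmax⟩ := I.exists_max_image pay hI
  obtain ⟨f, hfF, hMf⟩ := hcov M hMI
  have hMsurv : M ∈ survivors I D pay F := by
    refine Finset.mem_filter.2 ⟨hMI, ?_⟩
    rintro ⟨n, p, -, -, -, ⟨o', ho'⟩, hall⟩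
    have : o' ∈ I := (Finset.mem_inter.1 (target_subset I D pay n p ho')).1
    exact absurd (hall o' ho') (not_lt.2 (hMmax o' this))
  -- all survivors lie in D f
  have hsurvf : ∀ s ∈ survivors I D pay F, s ∈ D f := by
    intro s hs
    rcases Finset.mem_filter.1 hs with ⟨hsI, hnd⟩
    by_contra hsf
    obtain ⟨c, hcF, hsc⟩ := hcov s hsI
    have hne : f ≠ c := by rintro rfl; exact hsf hsc
    exact hnd (key_discard I D pay F hdisj hpay f c hfF hcF hne M hMI hMf hMmax s hsI hsc)
  refine ⟨f, ⟨hfF, ⟨M, Finset.mem_inter.2 ⟨hMsurv, hMf⟩⟩⟩, ?_⟩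
  rintro g ⟨hgF, s, hs⟩
  rcases Finset.mem_inter.1 hs with ⟨hssurv, hsg⟩
  by_contra hgf
  exact Finset.disjoint_left.1 (hdisj g f hgf) hsg (hsurvf s hssurv)
end

section
/- The outcome of the Perfect Prediction Equilibrium is Pareto-optimal among all outcomes of the game: there is no outcome giving a strictly higher payoff to both players than the PPE outcome. -/
open Classical

/-- A finite two-player extensive-form game tree with perfect information:
leaves carry a pair of payoffs (Peter's, Mary's); internal nodes carry the
player to move (`true` = Peter, `false` = Mary) and a list of children. -/
inductive GameTree where
  | leaf (pP pM : ℤ) : GameTree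
  | node (player : Bool) (children : List GameTree) : GameTree

namespace GameTree

/-- The list of outcomes (leaf payoff pairs) of a game tree. -/
def outcomes : GameTree → List (ℤ × ℤ)
  | .leaf p m => [(p, m)]
  | .node _ ts => ts.attach.flatMap (fun t => outcomes t.1)
decreasing_by
  have := List.sizeOf_lt_of_mem t.2
  simp only [GameTree.node.sizeOf_spec]
  omega

/-- The payoff of a given player at an outcome. -/
def payOf (pl : Bool) (o : ℤ × ℤ) : ℤ := if pl then o.1 else o.2

/-- Every internal node has a nonempty list of children. -/
def WellFormed : GameTree → Prop
  | .leaf _ _ => True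
  | .node _ ts => ts ≠ [] ∧ ∀ t ∈ ts.attach, WellFormed t.1
decreasing_by
  have := List.sizeOf_lt_of_mem t.2
  simp only [GameTree.node.sizeOf_spec]
  omega

/-- Strict preferences: each player's payoffs at the outcomes are pairwise
distinct. -/
def StrictPref (g : GameTree) : Prop :=
  (g.outcomes.map Prod.fst).Nodup ∧ (g.outcomes.map Prod.snd).Nodup

/-- Target set of a Newcombian State (a list of children subtrees) with respect
to the current player's payoff `pay` and the remaining-outcome set `I`. -/
noncomputable def target (pay : ℤ × ℤ → ℤ) (I : Finset (ℤ × ℤ)) :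
    List GameTree → Finset (ℤ × ℤ)
  | [] => ∅
  | [t] => I ∩ t.outcomes.toFinset
  | t :: u :: p =>
      let Tp := target pay I (u :: p)
      (I ∩ t.outcomes.toFinset).filter
        (fun o => ¬ (Tp.Nonempty ∧ ∀ o' ∈ Tp, pay o < pay o'))

/-- `o` is discarded by some Newcombian State at a node with children `ts`,
remaining set `I` and current-player payoff `pay`. -/
def Discards (pay : ℤ × ℤ → ℤ) (ts : List GameTree) (I : Finset (ℤ × ℤ))
    (o : ℤ × ℤ) : Prop :=
  ∃ η : List GameTree, η ≠ [] ∧ (∀ t ∈ η, t ∈ ts) ∧ η.Chain' (· ≠ ·) ∧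
    o ∈ I ∧ (∀ t ∈ η.head?, o ∉ t.outcomes.toFinset) ∧
    (target pay I η).Nonempty ∧
    ∀ o' ∈ target pay I η, pay o < pay o'

/-- The set of outcomes surviving all Newcombian-State discardings at a node. -/
noncomputable def survivors (pay : ℤ × ℤ → ℤ) (ts : List GameTree)
    (I : Finset (ℤ × ℤ)) : Finset (ℤ × ℤ) :=
  I.filter (fun o => ¬ Discards pay ts I o)

/-- The Perfect Prediction Equilibrium construction: starting from the root
with remaining set `I`, at each node discard all outcomes discarded by some
Newcombian State, then move to the unique child whose outcomes contain all
remaining outcomes; the reached leaf is the PPE outcome. -/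
inductive PPEReach : GameTree → Finset (ℤ × ℤ) → (ℤ × ℤ) → Prop
  | leaf (p m : ℤ) (I : Finset (ℤ × ℤ)) (h : (p, m) ∈ I) :
      PPEReach (.leaf p m) I (p, m)
  | node (pl : Bool) (ts : List GameTree) (I : Finset (ℤ × ℤ))
      (t : GameTree) (o : ℤ × ℤ) (ht : t ∈ ts)
      (hsub : survivors (payOf pl) ts I ⊆ t.outcomes.toFinset)
      (hrec : PPEReach t (survivors (payOf pl) ts I) o) :
      PPEReach (.node pl ts) I o

/-- Backward induction (Subgame Perfect Equilibrium) outcome: at each node the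
current player moves to the child whose backward-induction outcome maximizes
her payoff. -/
noncomputable def biOutcome : GameTree → ℤ × ℤ
  | .leaf p m => (p, m)
  | .node pl ts =>
      ((ts.attach.map (fun t => biOutcome t.1)).argmax (payOf pl)).getD (0, 0)
decreasing_by
  have := List.sizeOf_lt_of_mem t.2
  simp only [GameTree.node.sizeOf_spec]
  omega

end GameTree

namespace GameTree

lemma outcomes_node (pl : Bool) (ts : List GameTree) :
    (GameTree.node pl ts).outcomes = ts.attach.flatMap (fun t => t.1.outcomes) := by
  rw [GameTree.outcomes]

lemma node_nodup_fst {pl : Bool} {ts : List GameTree}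
    (h : (GameTree.node pl ts).StrictPref) :
    (∀ x ∈ ts.attach, (x.1.outcomes.map Prod.fst).Nodup) ∧
      ts.attach.Pairwise (Function.onFun List.Disjoint fun x => x.1.outcomes.map Prod.fst) := by
  have h1 := h.1
  rw [outcomes_node, List.map_flatMap] at h1
  exact List.nodup_flatMap.mp h1

lemma node_nodup_snd {pl : Bool} {ts : List GameTree}
    (h : (GameTree.node pl ts).StrictPref) :
    (∀ x ∈ ts.attach, (x.1.outcomes.map Prod.snd).Nodup) := by
  have h2 := h.2
  rw [outcomes_node, List.map_flatMap] at h2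
  exact (List.nodup_flatMap.mp h2).1

lemma strictPref_child {pl : Bool} {ts : List GameTree}
    (h : (GameTree.node pl ts).StrictPref) {t : GameTree} (ht : t ∈ ts) :
    t.StrictPref :=
  ⟨(node_nodup_fst h).1 ⟨t, ht⟩ (List.mem_attach _ _),
   node_nodup_snd h ⟨t, ht⟩ (List.mem_attach _ _)⟩

lemma disj_children {pl : Bool} {ts : List GameTree}
    (h : (GameTree.node pl ts).StrictPref) {t u : GameTree} (ht : t ∈ ts)
    (hu : u ∈ ts) (htu : t ≠ u) {x : ℤ × ℤ} (hxt : x ∈ t.outcomes)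
    (hxu : x ∈ u.outcomes) : False := by
  have hp := (node_nodup_fst h).2
  have hsymm : Symmetric (Function.onFun List.Disjoint fun x : {y // y ∈ ts} => x.1.outcomes.map Prod.fst) :=
    fun a b hab => hab.symm
  haveI : Std.Symm (Function.onFun List.Disjoint fun x : {y // y ∈ ts} => x.1.outcomes.map Prod.fst) :=
    ⟨fun a b hab => hsymm hab⟩
  have hd := hp.forall (List.mem_attach _ ⟨t, ht⟩) (List.mem_attach _ ⟨u, hu⟩)
    (by simp [Subtype.ext_iff]; exact htu)
  exact hd (List.mem_map_of_mem (f := Prod.fst) hxt) (List.mem_map_of_mem (f := Prod.fst) hxu)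

lemma reach_mem {t : GameTree} {I : Finset (ℤ × ℤ)} {o : ℤ × ℤ}
    (h : GameTree.PPEReach t I o) : o ∈ I := by
  induction h with
  | leaf p m I h => exact h
  | node pl ts I t o ht hsub hrec ih => exact Finset.filter_subset _ _ ih

lemma exists_target_le (pay : ℤ × ℤ → ℤ) (ts : List GameTree) (I : Finset (ℤ × ℤ))
    (hdisj : ∀ t ∈ ts, ∀ u ∈ ts, t ≠ u → ∀ x ∈ t.outcomes, x ∉ u.outcomes)
    (o : ℤ × ℤ) (hoI : o ∈ I) (hnd : ¬ GameTree.Discards pay ts I o)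
    (η : List GameTree) (hne : η ≠ []) (hsub : ∀ t ∈ η, t ∈ ts)
    (hch : η.Chain' (· ≠ ·)) (hT : (GameTree.target pay I η).Nonempty) :
    ∃ o'' ∈ GameTree.target pay I η, pay o'' ≤ pay o := by
  by_cases hmem : ∀ t ∈ η.head?, o ∉ t.outcomes.toFinset
  · by_contra hc
    push_neg at hc
    exact hnd ⟨η, hne, hsub, hch, hoI, hmem, hT,
      fun o' ho' => hc o' ho'⟩
  · push_neg at hmem
    obtain ⟨t, htm, hot⟩ := hmem
    cases η with
    | nil => exact absurd rfl hne
    | cons t0 rest =>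
      have ht0 : t = t0 := (by simpa using htm : t0 = t).symm
      subst ht0
      cases rest with
      | nil =>
        refine ⟨o, ?_, le_refl _⟩
        simp only [GameTree.target]
        exact Finset.mem_inter.mpr ⟨hoI, hot⟩
      | cons u p =>
        by_cases hoT : o ∈ GameTree.target pay I (t :: u :: p)
        · exact ⟨o, hoT, le_refl _⟩
        · exfalso
          simp only [GameTree.target, Finset.mem_filter, Finset.mem_inter] at hoT
          push_neg at hoT
          obtain ⟨hTp, hlt⟩ := hoT ⟨hoI, hot⟩
          obtain ⟨htu, hch'⟩ := List.isChain_cons_cons.mp hch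
          apply hnd
          refine ⟨u :: p, List.cons_ne_nil _ _, fun x hx => hsub x (List.mem_cons_of_mem _ hx),
            hch', hoI, ?_, hTp, hlt⟩
          intro v hv
          have hvu : v = u := (by simpa using hv : u = v).symm
          subst hvu
          rw [List.mem_toFinset]
          exact hdisj t (hsub t List.mem_cons_self) v
            (hsub v (List.mem_cons_of_mem _ List.mem_cons_self)) htu o
            (List.mem_toFinset.mp hot)

theorem ppe_pareto_aux {t : GameTree} {I : Finset (ℤ × ℤ)} {o : ℤ × ℤ}
    (h : GameTree.PPEReach t I o) :
    t.StrictPref → I ⊆ t.outcomes.toFinset →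
      ∀ o' ∈ I, ¬ (o.1 < o'.1 ∧ o.2 < o'.2) := by
  induction h with
  | leaf p m I hmem =>
    intro _ hI o' ho' hdom
    have h1 := hI ho'
    simp only [GameTree.outcomes, List.toFinset_cons, List.toFinset_nil] at h1
    have : o' = (p, m) := by simpa using h1
    subst this
    exact absurd hdom.1 (lt_irrefl _)
  | node pl ts I tc oo ht hsub hrec ih =>
    intro hsp hI o' ho' hdom
    by_cases hs : o' ∈ GameTree.survivors (GameTree.payOf pl) ts I
    · exact ih (strictPref_child hsp ht) hsub o' hs hdom
    · have hD : GameTree.Discards (GameTree.payOf pl) ts I o' := by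
        simp only [GameTree.survivors, Finset.mem_filter, not_and, not_not] at hs
        exact hs ho'
      obtain ⟨η, hne, hsubη, hch, _, hhead, hTne, hlt⟩ := hD
      have hoS := reach_mem hrec
      have hnd : ¬ GameTree.Discards (GameTree.payOf pl) ts I oo :=
        (Finset.mem_filter.mp hoS).2
      have hoI : oo ∈ I := (Finset.mem_filter.mp hoS).1
      have hdisj : ∀ t ∈ ts, ∀ u ∈ ts, t ≠ u → ∀ x ∈ t.outcomes, x ∉ u.outcomes :=
        fun t htt u hu htu x hxt hxu => disj_children hsp htt hu htu hxt hxu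
      obtain ⟨o'', ho'', hle⟩ := exists_target_le (GameTree.payOf pl) ts I hdisj oo hoI
        hnd η hne hsubη hch hTne
      have hfin : GameTree.payOf pl o' < GameTree.payOf pl oo :=
        lt_of_lt_of_le (hlt o'' ho'') hle
      obtain ⟨h1, h2⟩ := hdom
      cases pl <;> simp [GameTree.payOf] at hfin <;> omega

end GameTree

/-- the PPE outcome is Pareto-optimal among all outcomes of the
game: no outcome gives a strictly higher payoff to both players. -/
theorem ppe_pareto_optimal (g : GameTree) (hwf : g.WellFormed)
    (hsp : g.StrictPref) (o : ℤ × ℤ)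
    (hppe : GameTree.PPEReach g g.outcomes.toFinset o) :
    ∀ o' ∈ g.outcomes, ¬ (o.1 < o'.1 ∧ o.2 < o'.2) := by
  intro o' ho'
  exact GameTree.ppe_pareto_aux hppe hsp (le_refl _) o' (List.mem_toFinset.mpr ho')
end
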